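/- Under the hypotheses of the generalized constraint theorem (v = dm odd, a_i, b_i ∈ {-1,1}, PSD_A(s)+PSD_B(s) = 2v-2 for s ≠ 0 and = 4v-2 for s = 0), for each r = 1,...,d-1 one has Σ_{0≤k<l<d} (A_k A_l + B_k B_l) sin²(π(l-k)r/d) = v/2. -/

import Mathlib

noncomputable def PSD (v : ℕ) (x : ℕ → ℝ) (k : ℕ) : ℝ :=
  ‖∑ α ∈ Finset.range v, (x α : ℂ)
    * Complex.exp (2 * (Real.pi : ℂ) * Complex.I * α * k / v)‖ ^ 2

open Finset

private lemma sum_grid (d m : ℕ) (g : ℕ → ℂ) :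
    ∑ α ∈ range (d * m), g α = ∑ k ∈ range d, ∑ i ∈ range m, g (k + i * d) := by
  induction m with
  | zero => simp
  | succ m ih =>
    have h : d * (m + 1) = d * m + d := by ring
    rw [h, Finset.sum_range_add, ih]
    simp only [Finset.sum_range_succ, Finset.sum_add_distrib]
    congr 1
    exact Finset.sum_congr rfl fun i _ => by rw [Nat.mul_comm, Nat.add_comm]

private lemma sum_split (d : ℕ) (f : ℕ → ℕ → ℝ) :
    ∑ k ∈ range d, ∑ l ∈ range d, f k l
      = ∑ l ∈ range d, f l l + ∑ l ∈ range d, ∑ k ∈ range l, (f k l + f l k) := by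
  induction d with
  | zero => simp
  | succ d ih =>
    simp only [Finset.sum_range_succ, Finset.sum_add_distrib] at *
    rw [ih]
    ring

private lemma psd_eq (d m : ℕ) (hd : 0 < d) (hm : 0 < m) (x : ℕ → ℝ) (r : ℕ) :
    PSD (d * m) x (r * m)
      = (∑ k ∈ Finset.range d, (∑ i ∈ Finset.range m, x (k + i * d)) ^ 2)
        + 2 * ∑ l ∈ Finset.range d, ∑ k ∈ Finset.range l,
            (∑ i ∈ Finset.range m, x (k + i * d)) * (∑ i ∈ Finset.range m, x (l + i * d))
              * Real.cos (2 * Real.pi * ((l : ℝ) - k) * r / d) := by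
  have hd' : (d : ℂ) ≠ 0 := Nat.cast_ne_zero.2 hd.ne'
  have hm' : (m : ℂ) ≠ 0 := Nat.cast_ne_zero.2 hm.ne'
  set X : ℕ → ℝ := fun k => ∑ i ∈ Finset.range m, x (k + i * d) with hX
  set θ : ℕ → ℝ := fun k => 2 * Real.pi * k * r / d with hθ
  have hA : ∑ α ∈ Finset.range (d * m), (x α : ℂ)
        * Complex.exp (2 * (Real.pi : ℂ) * Complex.I * α * (r * m : ℕ) / (d * m : ℕ))
      = ∑ k ∈ Finset.range d, ((X k : ℂ)) * Complex.exp ((θ k : ℝ) * Complex.I) := by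
    rw [sum_grid]
    refine Finset.sum_congr rfl fun k hk => ?_
    have : ∀ i ∈ Finset.range m,
        (x (k + i * d) : ℂ) * Complex.exp (2 * (Real.pi : ℂ) * Complex.I * (k + i * d : ℕ) * (r * m : ℕ) / (d * m : ℕ))
        = (x (k + i * d) : ℂ) * Complex.exp ((θ k : ℝ) * Complex.I) := by
      intro i hi
      congr 1
      have harg : 2 * (Real.pi : ℂ) * Complex.I * (k + i * d : ℕ) * (r * m : ℕ) / (d * m : ℕ)
          = ((θ k : ℝ) : ℂ) * Complex.I + ((i * r : ℤ) : ℂ) * (2 * (Real.pi : ℂ) * Complex.I) := by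
        simp only [hθ]
        push_cast
        field_simp
      rw [harg, Complex.exp_add, Complex.exp_int_mul_two_pi_mul_I, mul_one]
    rw [Finset.sum_congr rfl this, ← Finset.sum_mul, hX]
    push_cast
    ring
  have key : PSD (d * m) x (r * m)
      = ∑ k ∈ Finset.range d, ∑ l ∈ Finset.range d, X k * X l * Real.cos (θ k - θ l) := by
    rw [PSD, hA, Complex.sq_norm]
    have h1 : Complex.normSq (∑ k ∈ Finset.range d, ((X k : ℂ)) * Complex.exp ((θ k : ℝ) * Complex.I))
        = ((∑ k ∈ Finset.range d, ((X k : ℂ)) * Complex.exp ((θ k : ℝ) * Complex.I))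
          * (starRingEnd ℂ) (∑ l ∈ Finset.range d, ((X l : ℂ)) * Complex.exp ((θ l : ℝ) * Complex.I))).re := by
      rw [Complex.mul_conj]; simp
    rw [h1, map_sum]
    have h2 : ∀ l, (starRingEnd ℂ) (((X l : ℂ)) * Complex.exp ((θ l : ℝ) * Complex.I))
        = (X l : ℂ) * Complex.exp ((-θ l : ℝ) * Complex.I) := by
      intro l
      rw [map_mul, ← Complex.exp_conj]
      simp [Complex.conj_I, mul_comm]
    simp only [h2]
    rw [Finset.sum_mul_sum, Complex.re_sum]
    refine Finset.sum_congr rfl fun k _ => ?_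
    rw [Complex.re_sum]
    refine Finset.sum_congr rfl fun l _ => ?_
    have : (X k : ℂ) * Complex.exp ((θ k : ℝ) * Complex.I) * ((X l : ℂ) * Complex.exp ((-θ l : ℝ) * Complex.I))
        = ((X k * X l : ℝ) : ℂ) * Complex.exp (((θ k - θ l : ℝ)) * Complex.I) := by
      have e : ((θ k - θ l : ℝ) : ℂ) * Complex.I = (θ k : ℝ) * Complex.I + (-θ l : ℝ) * Complex.I := by
        push_cast; ring
      rw [e, Complex.exp_add]
      push_cast
      ring
    rw [this, Complex.re_ofReal_mul, Complex.exp_ofReal_mul_I_re]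
  rw [key, sum_split]
  congr 1
  · refine Finset.sum_congr rfl fun l _ => ?_
    simp [sq]
    rfl
  · rw [Finset.mul_sum]
    refine Finset.sum_congr rfl fun l _ => ?_
    rw [Finset.mul_sum]
    refine Finset.sum_congr rfl fun k hk => ?_
    have hc : Real.cos (θ k - θ l) = Real.cos (θ l - θ k) := by
      rw [← Real.cos_neg]; ring_nf
    have hθeq : θ l - θ k = 2 * Real.pi * ((l : ℝ) - k) * r / d := by
      simp only [hθ]; ring
    rw [hc, hθeq]
    ring

/-- Generalized vertical constraint:
`∑_{k<l} (A_k A_l + B_k B_l) sin²(π(l-k)r/d) = v/2` for each `r = 1, …, d-1`. -/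
theorem stmt10 (v d m : ℕ) (hv : Odd v) (hv0 : 0 < v) (hdm : v = d * m)
    (a b : ℕ → ℝ)
    (ha : ∀ i, a i = -1 ∨ a i = 1) (hb : ∀ i, b i = -1 ∨ b i = 1)
    (hpsd : ∀ s : ℕ, 1 ≤ s → s ≤ v - 1 → PSD v a s + PSD v b s = 2 * v - 2)
    (hpsd0 : PSD v a 0 + PSD v b 0 = 4 * v - 2)
    (r : ℕ) (hr1 : 1 ≤ r) (hr2 : r ≤ d - 1) :
    ∑ l ∈ Finset.range d, ∑ k ∈ Finset.range l,
        ((∑ i ∈ Finset.range m, a (k + i * d)) * (∑ i ∈ Finset.range m, a (l + i * d))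
            + (∑ i ∈ Finset.range m, b (k + i * d)) * (∑ i ∈ Finset.range m, b (l + i * d)))
          * Real.sin (Real.pi * ((l : ℝ) - k) * r / d) ^ 2
      = (v : ℝ) / 2 := by
  have hd : 0 < d := by
    rcases Nat.eq_zero_or_pos d with h | h
    · subst h; simp at hdm; omega
    · exact h
  have hm : 0 < m := by
    rcases Nat.eq_zero_or_pos m with h | h
    · subst h; simp at hdm; omega
    · exact h
  obtain ⟨d', rfl⟩ : ∃ d', d = d' + 1 := ⟨d - 1, by omega⟩
  set d := d' + 1 with hdd
  have h0a : PSD v a 0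
      = (∑ k ∈ Finset.range d, (∑ i ∈ Finset.range m, a (k + i * d)) ^ 2)
        + 2 * ∑ l ∈ Finset.range d, ∑ k ∈ Finset.range l,
            (∑ i ∈ Finset.range m, a (k + i * d)) * (∑ i ∈ Finset.range m, a (l + i * d)) := by
    rw [hdm]
    simpa using psd_eq d m hd hm a 0
  have h0b : PSD v b 0
      = (∑ k ∈ Finset.range d, (∑ i ∈ Finset.range m, b (k + i * d)) ^ 2)
        + 2 * ∑ l ∈ Finset.range d, ∑ k ∈ Finset.range l,
            (∑ i ∈ Finset.range m, b (k + i * d)) * (∑ i ∈ Finset.range m, b (l + i * d)) := by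
    rw [hdm]
    simpa using psd_eq d m hd hm b 0
  have hra : PSD v a (r * m)
      = (∑ k ∈ Finset.range d, (∑ i ∈ Finset.range m, a (k + i * d)) ^ 2)
        + 2 * ∑ l ∈ Finset.range d, ∑ k ∈ Finset.range l,
            (∑ i ∈ Finset.range m, a (k + i * d)) * (∑ i ∈ Finset.range m, a (l + i * d))
              * Real.cos (2 * Real.pi * ((l : ℝ) - k) * r / d) := by
    rw [hdm]; exact psd_eq d m hd hm a r
  have hrb : PSD v b (r * m)
      = (∑ k ∈ Finset.range d, (∑ i ∈ Finset.range m, b (k + i * d)) ^ 2)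
        + 2 * ∑ l ∈ Finset.range d, ∑ k ∈ Finset.range l,
            (∑ i ∈ Finset.range m, b (k + i * d)) * (∑ i ∈ Finset.range m, b (l + i * d))
              * Real.cos (2 * Real.pi * ((l : ℝ) - k) * r / d) := by
    rw [hdm]; exact psd_eq d m hd hm b r
  have hs1 : 1 ≤ r * m := Nat.mul_pos hr1 hm
  have hs2 : r * m ≤ v - 1 := by
    have h1 : r * m ≤ d' * m := Nat.mul_le_mul_right m (by omega)
    have hv' : v = d' * m + m := by rw [hdm]; ring
    have h2 : d' * m < v := by rw [hv']; exact Nat.lt_add_of_pos_right hm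
    exact le_trans h1 (Nat.le_pred_of_lt h2)
  have hEr := hpsd (r * m) hs1 hs2
  rw [hra, hrb] at hEr
  rw [h0a, h0b] at hpsd0
  have hsin : ∀ l k : ℕ, Real.sin (Real.pi * ((l : ℝ) - k) * r / d) ^ 2
      = 1 / 2 - Real.cos (2 * Real.pi * ((l : ℝ) - k) * r / d) / 2 := by
    intro l k
    have e : 2 * Real.pi * ((l : ℝ) - k) * r / d = 2 * (Real.pi * ((l : ℝ) - k) * r / d) := by ring
    rw [Real.sin_sq_eq_half_sub, e]
  have expand : ∑ l ∈ Finset.range d, ∑ k ∈ Finset.range l,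
        ((∑ i ∈ Finset.range m, a (k + i * d)) * (∑ i ∈ Finset.range m, a (l + i * d))
            + (∑ i ∈ Finset.range m, b (k + i * d)) * (∑ i ∈ Finset.range m, b (l + i * d)))
          * Real.sin (Real.pi * ((l : ℝ) - k) * r / d) ^ 2
      = ((∑ l ∈ Finset.range d, ∑ k ∈ Finset.range l,
            (∑ i ∈ Finset.range m, a (k + i * d)) * (∑ i ∈ Finset.range m, a (l + i * d)))
          + (∑ l ∈ Finset.range d, ∑ k ∈ Finset.range l,
            (∑ i ∈ Finset.range m, b (k + i * d)) * (∑ i ∈ Finset.range m, b (l + i * d)))) / 2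
        - ((∑ l ∈ Finset.range d, ∑ k ∈ Finset.range l,
            (∑ i ∈ Finset.range m, a (k + i * d)) * (∑ i ∈ Finset.range m, a (l + i * d))
              * Real.cos (2 * Real.pi * ((l : ℝ) - k) * r / d))
          + (∑ l ∈ Finset.range d, ∑ k ∈ Finset.range l,
            (∑ i ∈ Finset.range m, b (k + i * d)) * (∑ i ∈ Finset.range m, b (l + i * d))
              * Real.cos (2 * Real.pi * ((l : ℝ) - k) * r / d))) / 2 := by
    simp only [hsin, ← Finset.sum_add_distrib, ← Finset.sum_sub_distrib, Finset.sum_div,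
      ← Finset.sum_sub_distrib]
    refine Finset.sum_congr rfl fun l _ => ?_
    refine Finset.sum_congr rfl fun k _ => ?_
    ring
  rw [expand]
  linarith [hpsd0, hEr]
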